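/- arXiv:2110.05701 — 2 statements merged into one kernel-verified Lean document; each statement's English description precedes it below -/
import Mathlib

section
/- Assume the MAXBET model. Let (O_1,…,O_m) be a candidate critical point of the OTSM problem with multipliers Λ_i, let τ_i denote the smallest eigenvalue of Λ_i, let O ∈ ℝ^{D×r} stack O_1,…,O_m, and define L ∈ ℝ^{D×D} as the block-diagonal matrix with i-th diagonal block O_iΛ_iO_iᵀ + τ_i(I_{d_i} − O_iO_iᵀ), minus S. If m ≥ ‖ΘᵀO − m·I_r‖ + ‖Θ − O‖² + max_{1≤i≤m}‖[WO]_i‖ + m·max_{1≤i≤m}‖O_iᵀΘ_i − I_r‖ + ‖W‖, then L is positive semidefinite (so the certificate of global optimality of (O_1,…,O_m) holds). -/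
open Matrix BigOperators MeasureTheory ProbabilityTheory

noncomputable section

/-- The index type of a `D × D` block matrix with blocks of sizes `d 0, …, d (m-1)`. -/
abbrev Idx {m : ℕ} (d : Fin m → ℕ) := (i : Fin m) × Fin (d i)

/-- The `(i,j)` block of a `D × D` matrix. -/
def blk {m : ℕ} {d : Fin m → ℕ} (S : Matrix (Idx d) (Idx d) ℝ) (i j : Fin m) :
    Matrix (Fin (d i)) (Fin (d j)) ℝ :=
  Matrix.of fun a b => S ⟨i, a⟩ ⟨j, b⟩

/-- The `i`-th `d i × r` block of a `D × r` matrix. -/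
def rblk {m r : ℕ} {d : Fin m → ℕ} (V : Matrix (Idx d) (Fin r) ℝ) (i : Fin m) :
    Matrix (Fin (d i)) (Fin r) ℝ :=
  Matrix.of fun a c => V ⟨i, a⟩ c

/-- Stacking matrices `O i ∈ ℝ^{d i × r}` into a `D × r` matrix. -/
def stack {m r : ℕ} {d : Fin m → ℕ} (O : ∀ i, Matrix (Fin (d i)) (Fin r) ℝ) :
    Matrix (Idx d) (Fin r) ℝ :=
  Matrix.of fun p c => O p.1 p.2 c

/-- Semi-orthogonality: `Oᵀ O = I`. -/
def SemiOrth {n r : ℕ} (O : Matrix (Fin n) (Fin r) ℝ) : Prop := Oᵀ * O = 1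

/-- Frobenius norm of a real matrix. -/
def frobNorm {α β : Type*} [Fintype α] [Fintype β] (A : Matrix α β ℝ) : ℝ :=
  Real.sqrt (∑ a, ∑ b, (A a b) ^ 2)

/-- Spectral (ℓ₂ operator) norm of a real matrix. -/
def specNorm {α β : Type*} [Fintype α] [Fintype β] [DecidableEq β] (A : Matrix α β ℝ) : ℝ :=
  ‖LinearMap.toContinuousLinearMap (Matrix.toEuclideanLin A)‖

/-- The OTSM objective `∑ i j, tr(Oᵢᵀ S_{ij} O_j)`. -/
def objVal {m r : ℕ} {d : Fin m → ℕ} (S : Matrix (Idx d) (Idx d) ℝ)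
    (O : ∀ i, Matrix (Fin (d i)) (Fin r) ℝ) : ℝ :=
  ∑ i, ∑ j, Matrix.trace ((O i)ᵀ * blk S i j * O j)

/-- Feasibility for the SDP relaxation. -/
def SDPFeasible {m : ℕ} {d : Fin m → ℕ} (r : ℕ) (U : Matrix (Idx d) (Idx d) ℝ) : Prop :=
  U.PosSemidef ∧ (∀ i, ((1 : Matrix (Fin (d i)) (Fin (d i)) ℝ) - blk U i i).PosSemidef) ∧
    ∀ i, Matrix.trace (blk U i i) = (r : ℝ)

/-- `U` solves the SDP relaxation. -/
def IsSDPSol {m : ℕ} {d : Fin m → ℕ} (r : ℕ) (S U : Matrix (Idx d) (Idx d) ℝ) : Prop :=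
  SDPFeasible r U ∧ ∀ U', SDPFeasible r U' → Matrix.trace (S * U') ≤ Matrix.trace (S * U)

/-- Feasibility for the rank-constrained problem. -/
def RankFeasible {m : ℕ} {d : Fin m → ℕ} (r : ℕ) (U : Matrix (Idx d) (Idx d) ℝ) : Prop :=
  SDPFeasible r U ∧ U.rank = r

/-- `U` solves the rank-constrained problem. -/
def IsRankSol {m : ℕ} {d : Fin m → ℕ} (r : ℕ) (S U : Matrix (Idx d) (Idx d) ℝ) : Prop :=
  RankFeasible r U ∧ ∀ U', RankFeasible r U' → Matrix.trace (S * U') ≤ Matrix.trace (S * U)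

/-- The MAXBET model: `S_{ij} = Θ_i Θ_jᵀ + W_{ij}` with `W` symmetric. -/
def MAXBET {m r : ℕ} {d : Fin m → ℕ} (S W : Matrix (Idx d) (Idx d) ℝ)
    (Θ : ∀ i, Matrix (Fin (d i)) (Fin r) ℝ) : Prop :=
  W.IsSymm ∧ ∀ i j, blk S i j = Θ i * (Θ j)ᵀ + blk W i j

/-- The MAXDIFF model: `S_{ii} = 0`, `S_{ij} = Θ_i Θ_jᵀ + W_{ij}` for `i ≠ j`,
`W` symmetric with `W_{ii} = 0`. -/
def MAXDIFF {m r : ℕ} {d : Fin m → ℕ} (S W : Matrix (Idx d) (Idx d) ℝ)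
    (Θ : ∀ i, Matrix (Fin (d i)) (Fin r) ℝ) : Prop :=
  W.IsSymm ∧ (∀ i, blk W i i = 0) ∧ (∀ i, blk S i i = 0) ∧
    ∀ i j, i ≠ j → blk S i j = Θ i * (Θ j)ᵀ + blk W i j

/-- The Lagrange multiplier `Λ_i = O_iᵀ (∑ j, S_{ij} O_j)`. -/
def lagrange {m r : ℕ} {d : Fin m → ℕ} (S : Matrix (Idx d) (Idx d) ℝ)
    (O : ∀ i, Matrix (Fin (d i)) (Fin r) ℝ) (i : Fin m) : Matrix (Fin r) (Fin r) ℝ :=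
  (O i)ᵀ * ∑ j, blk S i j * O j

/-- `(O_1, …, O_m)` is a critical point of the OTSM problem. -/
def IsCritical {m r : ℕ} {d : Fin m → ℕ} (S : Matrix (Idx d) (Idx d) ℝ)
    (O : ∀ i, Matrix (Fin (d i)) (Fin r) ℝ) : Prop :=
  (∀ i, SemiOrth (O i)) ∧
    ∀ i, (lagrange S O i).IsSymm ∧ O i * lagrange S O i = ∑ j, blk S i j * O j

/-- `(O_1, …, O_m)` is a candidate critical point of the OTSM problem. -/
def IsCandidate {m r : ℕ} {d : Fin m → ℕ} (S : Matrix (Idx d) (Idx d) ℝ)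
    (O : ∀ i, Matrix (Fin (d i)) (Fin r) ℝ) : Prop :=
  IsCritical S O ∧ ∀ i, (lagrange S O i).PosSemidef

/-- Assumption 1: `tr(Θᵀ S Θ) ≤ tr(Oᵀ S O)`. -/
def Assumption1 {m r : ℕ} {d : Fin m → ℕ} (S : Matrix (Idx d) (Idx d) ℝ)
    (Θ O : ∀ i, Matrix (Fin (d i)) (Fin r) ℝ) : Prop :=
  Matrix.trace ((stack Θ)ᵀ * S * stack Θ) ≤ Matrix.trace ((stack O)ᵀ * S * stack O)

/-- `Θ`-discordance of a noise matrix `W`. -/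
def Discordant {m r : ℕ} {d : Fin m → ℕ} (Θ : ∀ i, Matrix (Fin (d i)) (Fin r) ℝ)
    (W : Matrix (Idx d) (Idx d) ℝ) : Prop :=
  W.IsSymm ∧ specNorm W ≤ 3 * Real.sqrt (∑ i, (d i : ℝ)) ∧
    ∀ i, frobNorm (rblk (W * stack Θ) i) ≤
      3 * Real.sqrt ((∑ i, (d i : ℝ)) * r * Real.log m)

/-- The deterministic noise condition (3.1) of Theorem 3.1. -/
def DetCond31 {m r : ℕ} {d : Fin m → ℕ} (Θ : ∀ i, Matrix (Fin (d i)) (Fin r) ℝ)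
    (W : Matrix (Idx d) (Idx d) ℝ) : Prop :=
  specNorm W * (4 * Real.sqrt r + 1) + 1 < (m : ℝ) ∧
  4 * m * ((⨆ i, frobNorm (rblk (W * stack Θ) i)) + 4 * specNorm W ^ 2 * Real.sqrt ((r : ℝ) / m)) /
        ((m : ℝ) - specNorm W * (4 * Real.sqrt r + 1) - 1) +
      2 * ((⨆ i, frobNorm (rblk (W * stack Θ) i)) + 4 * specNorm W ^ 2 * Real.sqrt ((r : ℝ) / m)) +
      8 * specNorm W * Real.sqrt ((r : ℝ) / m) + 2 * specNorm W < (m : ℝ)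

/-- The deterministic noise condition (3.4) of Theorem 3.2. -/
def DetCond32 {m r : ℕ} {d : Fin m → ℕ} (Θ : ∀ i, Matrix (Fin (d i)) (Fin r) ℝ)
    (W : Matrix (Idx d) (Idx d) ℝ) : Prop :=
  4 * specNorm W * Real.sqrt r < (m : ℝ) ∧
  specNorm W * (4 * Real.sqrt r + 1) +
      ((⨆ i, frobNorm (rblk (W * stack Θ) i)) + 4 * specNorm W ^ 2 * Real.sqrt ((r : ℝ) / m)) +
      2 * m * ((⨆ i, frobNorm (rblk (W * stack Θ) i)) + 4 * specNorm W ^ 2 * Real.sqrt ((r : ℝ) / m)) /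
        ((m : ℝ) - 4 * specNorm W * Real.sqrt r) +
      16 * specNorm W ^ 2 * (r : ℝ) / m ≤ (m : ℝ)

/-- The "upper triangular" order on block indices. -/
def upTri {m : ℕ} {d : Fin m → ℕ} (a b : Idx d) : Prop :=
  a.1 < b.1 ∨ (a.1 = b.1 ∧ (a.2 : ℕ) ≤ (b.2 : ℕ))


namespace OTSMCertAux

open Matrix

/-! ### Euclidean norm machinery -/

noncomputable def enorm {α : Type*} [Fintype α] (x : α → ℝ) : ℝ :=
  ‖(WithLp.equiv 2 (α → ℝ)).symm x‖

lemma enorm_nonneg {α : Type*} [Fintype α] (x : α → ℝ) : 0 ≤ enorm x := norm_nonneg _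

lemma inner_eq_dot {α : Type*} [Fintype α] (x y : α → ℝ) :
    (inner ℝ ((WithLp.equiv 2 (α → ℝ)).symm x) ((WithLp.equiv 2 (α → ℝ)).symm y) : ℝ) = x ⬝ᵥ y := by
  simp only [PiLp.inner_apply, RCLike.inner_apply, WithLp.equiv_symm_apply, PiLp.toLp_apply, dotProduct,
    starRingEnd_apply, star_trivial]
  exact Finset.sum_congr rfl fun i _ => mul_comm _ _

lemma enorm_sq {α : Type*} [Fintype α] (x : α → ℝ) : enorm x * enorm x = x ⬝ᵥ x := by
  rw [enorm, ← real_inner_self_eq_norm_mul_norm, inner_eq_dot]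

lemma dot_self_nonneg' {α : Type*} [Fintype α] (x : α → ℝ) : 0 ≤ x ⬝ᵥ x := by
  rw [← enorm_sq]; exact mul_nonneg (enorm_nonneg x) (enorm_nonneg x)

lemma enorm_mulVec_le {α β : Type*} [Fintype α] [Fintype β] [DecidableEq β] (A : Matrix α β ℝ)
    (v : β → ℝ) : enorm (A *ᵥ v) ≤ specNorm A * enorm v := by
  have h := (LinearMap.toContinuousLinearMap (Matrix.toEuclideanLin A)).le_opNorm
      ((WithLp.equiv 2 (β → ℝ)).symm v)
  simpa [enorm, specNorm, Matrix.toEuclideanLin_apply_piLp_toLp, WithLp.equiv_symm_apply] using h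

lemma dot_le_enorm {α : Type*} [Fintype α] (x y : α → ℝ) : x ⬝ᵥ y ≤ enorm x * enorm y := by
  have h := real_inner_le_norm ((WithLp.equiv 2 (α → ℝ)).symm x) ((WithLp.equiv 2 (α → ℝ)).symm y)
  rwa [inner_eq_dot] at h

lemma enorm_smul {α : Type*} [Fintype α] (c : ℝ) (x : α → ℝ) : enorm (c • x) = |c| * enorm x := by
  rw [enorm, enorm]
  have : (WithLp.equiv 2 (α → ℝ)).symm (c • x) = c • (WithLp.equiv 2 (α → ℝ)).symm x := rfl
  rw [this, norm_smul, Real.norm_eq_abs]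

lemma enorm_neg {α : Type*} [Fintype α] (x : α → ℝ) : enorm (-x) = enorm x := by
  have : (-x) = (-1 : ℝ) • x := by funext a; simp
  rw [this, enorm_smul]; simp

lemma enorm_add_le {α : Type*} [Fintype α] (x y : α → ℝ) : enorm (x + y) ≤ enorm x + enorm y := by
  rw [enorm, enorm, enorm]
  have : (WithLp.equiv 2 (α → ℝ)).symm (x + y)
      = (WithLp.equiv 2 (α → ℝ)).symm x + (WithLp.equiv 2 (α → ℝ)).symm y := rfl
  rw [this]; exact norm_add_le _ _

lemma enorm_pos {α : Type*} [Fintype α] {x : α → ℝ} (hx : x ≠ 0) : 0 < enorm x := by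
  rw [enorm, norm_pos_iff]
  intro h
  apply hx
  have := congrArg (WithLp.equiv 2 (α → ℝ)) h
  simpa using this

lemma dot_mulVec_left {α β : Type*} [Fintype α] [Fintype β] (A : Matrix α β ℝ)
    (u : β → ℝ) (w : α → ℝ) : (A *ᵥ u) ⬝ᵥ w = u ⬝ᵥ (Aᵀ *ᵥ w) := by
  rw [dotProduct_comm, dotProduct_mulVec, mulVec_transpose, dotProduct_comm]

lemma enorm_semi_mulVec {α β : Type*} [Fintype α] [Fintype β] [DecidableEq β]
    (A : Matrix α β ℝ) (c : ℝ) (hc : 0 ≤ c) (hA : Aᵀ * A = c • 1) (v : β → ℝ) :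
    enorm (A *ᵥ v) = Real.sqrt c * enorm v := by
  have key : (A *ᵥ v) ⬝ᵥ (A *ᵥ v) = c * (v ⬝ᵥ v) := by
    rw [dot_mulVec_left, mulVec_mulVec, hA, smul_mulVec, one_mulVec, dotProduct_smul,
      smul_eq_mul]
  have h1 : enorm (A *ᵥ v) * enorm (A *ᵥ v) = c * (enorm v * enorm v) := by
    rw [enorm_sq, enorm_sq, key]
  nlinarith [enorm_nonneg (A *ᵥ v), enorm_nonneg v, Real.sq_sqrt hc, Real.sqrt_nonneg c,
    mul_nonneg (Real.sqrt_nonneg c) (enorm_nonneg v)]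

lemma enorm_semi_transpose_mulVec_le {α β : Type*} [Fintype α] [Fintype β] [DecidableEq β]
    (A : Matrix α β ℝ) (c : ℝ) (hc : 0 ≤ c) (hA : Aᵀ * A = c • 1) (w : α → ℝ) :
    enorm (Aᵀ *ᵥ w) ≤ Real.sqrt c * enorm w := by
  have key : enorm (Aᵀ *ᵥ w) * enorm (Aᵀ *ᵥ w) = (A *ᵥ (Aᵀ *ᵥ w)) ⬝ᵥ w := by
    rw [enorm_sq, dot_mulVec_left, transpose_transpose, dotProduct_comm]
  have h2 : (A *ᵥ (Aᵀ *ᵥ w)) ⬝ᵥ w ≤ Real.sqrt c * enorm (Aᵀ *ᵥ w) * enorm w := by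
    calc (A *ᵥ (Aᵀ *ᵥ w)) ⬝ᵥ w ≤ enorm (A *ᵥ (Aᵀ *ᵥ w)) * enorm w := dot_le_enorm _ _
    _ = Real.sqrt c * enorm (Aᵀ *ᵥ w) * enorm w := by rw [enorm_semi_mulVec A c hc hA]
  rcases eq_or_lt_of_le (enorm_nonneg (Aᵀ *ᵥ w)) with h | h
  · rw [← h]; exact mul_nonneg (Real.sqrt_nonneg c) (enorm_nonneg w)
  · nlinarith

lemma enorm_transpose_mulVec_le {α β : Type*} [Fintype α] [Fintype β] [DecidableEq α]
    [DecidableEq β] (A : Matrix α β ℝ) (w : α → ℝ) :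
    enorm (Aᵀ *ᵥ w) ≤ specNorm A * enorm w := by
  have key : enorm (Aᵀ *ᵥ w) * enorm (Aᵀ *ᵥ w) = (A *ᵥ (Aᵀ *ᵥ w)) ⬝ᵥ w := by
    rw [enorm_sq, dot_mulVec_left, transpose_transpose, dotProduct_comm]
  have h2 : (A *ᵥ (Aᵀ *ᵥ w)) ⬝ᵥ w ≤ specNorm A * enorm (Aᵀ *ᵥ w) * enorm w := by
    calc (A *ᵥ (Aᵀ *ᵥ w)) ⬝ᵥ w ≤ enorm (A *ᵥ (Aᵀ *ᵥ w)) * enorm w := dot_le_enorm _ _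
    _ ≤ specNorm A * enorm (Aᵀ *ᵥ w) * enorm w := by
        have h1 := enorm_mulVec_le A (Aᵀ *ᵥ w)
        have h0 := enorm_nonneg w
        nlinarith
  rcases eq_or_lt_of_le (enorm_nonneg (Aᵀ *ᵥ w)) with h | h
  · rw [← h]
    have : (0:ℝ) ≤ specNorm A := norm_nonneg _
    exact mul_nonneg this (enorm_nonneg w)
  · nlinarith

/-! ### Spectrum machinery -/

lemma exists_eigvec {n : Type*} [Fintype n] [DecidableEq n] (Λ : Matrix n n ℝ) (τ : ℝ)
    (hτ : τ ∈ spectrum ℝ Λ) : ∃ v : n → ℝ, v ≠ 0 ∧ Λ *ᵥ v = τ • v := by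
  rw [spectrum.mem_iff] at hτ
  have hdet : (algebraMap ℝ (Matrix n n ℝ) τ - Λ).det = 0 := by
    by_contra hd
    exact hτ ((Matrix.isUnit_iff_isUnit_det _).mpr (isUnit_iff_ne_zero.mpr hd))
  obtain ⟨v, hv0, hv⟩ := (Matrix.exists_mulVec_eq_zero_iff).mpr hdet
  refine ⟨v, hv0, ?_⟩
  rw [Algebra.algebraMap_eq_smul_one, sub_mulVec, smul_mulVec, one_mulVec] at hv
  exact (sub_eq_zero.mp hv).symm

lemma isHermitian_of_isSymm {n : Type*} [Fintype n] {A : Matrix n n ℝ} (h : A.IsSymm) :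
    A.IsHermitian := by
  rw [Matrix.IsHermitian, conjTranspose]
  ext p q
  simp [Matrix.map_apply, h.apply]

lemma rayleigh_lower {n : Type*} [Fintype n] [DecidableEq n] (Λ : Matrix n n ℝ) (hs : Λ.IsSymm)
    (τ : ℝ) (hτ : IsLeast (spectrum ℝ Λ) τ) (v : n → ℝ) : τ * (v ⬝ᵥ v) ≤ v ⬝ᵥ (Λ *ᵥ v) := by
  set Λ' : Matrix n n ℝ := Λ - τ • 1 with hΛ'
  have hs' : Λ'.IsSymm := by
    rw [Matrix.IsSymm] at hs ⊢
    rw [hΛ', transpose_sub, hs, transpose_smul, transpose_one]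
  have hH' : Λ'.IsHermitian := isHermitian_of_isSymm hs'
  have heig : ∀ k, 0 ≤ hH'.eigenvalues k := by
    intro k
    have hmem : hH'.eigenvalues k ∈ spectrum ℝ Λ' := hH'.eigenvalues_mem_spectrum_real k
    have hmem2 : hH'.eigenvalues k + τ ∈ spectrum ℝ Λ := by
      rw [spectrum.mem_iff] at hmem ⊢
      convert hmem using 2
      show _ = _ - (Λ - τ • 1)
      rw [map_add, Algebra.algebraMap_eq_smul_one τ]
      abel
    linarith [hτ.2 hmem2]
  have hpsd : Λ'.PosSemidef := hH'.posSemidef_iff_eigenvalues_nonneg.mpr heig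
  have h0 := hpsd.dotProduct_mulVec_nonneg v
  rw [star_trivial] at h0
  rw [hΛ', sub_mulVec, smul_mulVec, one_mulVec, dotProduct_sub, dotProduct_smul,
    smul_eq_mul] at h0
  linarith

/-! ### Block decomposition machinery -/

variable {m r : ℕ} {d : Fin m → ℕ}

def vblk (x : Idx d → ℝ) (i : Fin m) : Fin (d i) → ℝ := fun a => x ⟨i, a⟩

lemma sum_idx (f : Idx d → ℝ) : ∑ p, f p = ∑ i, ∑ a, f ⟨i, a⟩ := by
  rw [← Finset.univ_sigma_univ, Finset.sum_sigma]

lemma dot_idx (x y : Idx d → ℝ) : x ⬝ᵥ y = ∑ i, vblk x i ⬝ᵥ vblk y i := by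
  rw [dotProduct, sum_idx]; rfl

lemma vblk_mulVec (M : Matrix (Idx d) (Idx d) ℝ) (y : Idx d → ℝ) (i : Fin m) :
    vblk (M *ᵥ y) i = ∑ j, blk M i j *ᵥ vblk y j := by
  funext a
  show (M *ᵥ y) ⟨i, a⟩ = _
  rw [mulVec, dotProduct, sum_idx]
  simp only [Finset.sum_apply]
  rfl

lemma stackT_mulVec (Θ : ∀ i, Matrix (Fin (d i)) (Fin r) ℝ) (x : Idx d → ℝ) :
    (stack Θ)ᵀ *ᵥ x = ∑ i, (Θ i)ᵀ *ᵥ vblk x i := by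
  funext k
  calc ((stack Θ)ᵀ *ᵥ x) k = ∑ p : Idx d, (Θ p.1)ᵀ k p.2 * x p := by
        simp [mulVec, dotProduct, transpose_apply, stack]
  _ = ∑ i, ∑ a, (Θ i)ᵀ k a * x ⟨i, a⟩ := sum_idx _
  _ = (∑ i, (Θ i)ᵀ *ᵥ vblk x i) k := by
        simp [mulVec, dotProduct, vblk, Finset.sum_apply]

lemma stackT_mul_stack (A B : ∀ i, Matrix (Fin (d i)) (Fin r) ℝ) :
    (stack A)ᵀ * stack B = ∑ i, (A i)ᵀ * B i := by
  ext k l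
  calc ((stack A)ᵀ * stack B) k l = ∑ p : Idx d, (A p.1)ᵀ k p.2 * B p.1 p.2 l := by
        simp [Matrix.mul_apply, transpose_apply, stack]
  _ = ∑ i, ∑ a, (A i)ᵀ k a * B i a l := sum_idx _
  _ = (∑ i, (A i)ᵀ * B i) k l := by
        simp [Matrix.mul_apply, Matrix.sum_apply]

lemma rblk_mul_stack (M : Matrix (Idx d) (Idx d) ℝ) (O : ∀ i, Matrix (Fin (d i)) (Fin r) ℝ)
    (i : Fin m) : rblk (M * stack O) i = ∑ j, blk M i j * O j := by
  ext a k
  calc rblk (M * stack O) i a k = ∑ p : Idx d, M ⟨i, a⟩ p * O p.1 p.2 k := by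
        simp [rblk, Matrix.mul_apply, stack]
  _ = ∑ j, ∑ b, M ⟨i, a⟩ ⟨j, b⟩ * O j b k := sum_idx _
  _ = (∑ j, blk M i j * O j) a k := by
        simp [Matrix.mul_apply, Matrix.sum_apply, blk]

lemma dot_sum {α : Type*} [Fintype α] {ι : Type*} (s : Finset ι) (x : α → ℝ) (f : ι → α → ℝ) :
    x ⬝ᵥ (∑ i ∈ s, f i) = ∑ i ∈ s, x ⬝ᵥ f i := by
  simp only [dotProduct, Finset.sum_apply, Finset.mul_sum]
  exact Finset.sum_comm

lemma sum_dot {α : Type*} [Fintype α] {ι : Type*} (s : Finset ι) (x : α → ℝ) (f : ι → α → ℝ) :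
    (∑ i ∈ s, f i) ⬝ᵥ x = ∑ i ∈ s, f i ⬝ᵥ x := by
  simp only [dotProduct, Finset.sum_apply, Finset.sum_mul]
  exact Finset.sum_comm

end OTSMCertAux

open OTSMCertAux

set_option maxHeartbeats 2000000

/-- under the MAXBET model, if the noise condition (5.6) holds, then the
certificate matrix `L` of a candidate critical point is positive semidefinite. -/
theorem certificate_L_psd {m r : ℕ} (hm : 0 < m) (hr : 0 < r)
    {d : Fin m → ℕ} (hd : ∀ i, r ≤ d i)
    (Θ : ∀ i, Matrix (Fin (d i)) (Fin r) ℝ) (hΘ : ∀ i, SemiOrth (Θ i))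
    (S W : Matrix (Idx d) (Idx d) ℝ) (hmodel : MAXBET S W Θ)
    (O : ∀ i, Matrix (Fin (d i)) (Fin r) ℝ) (hcand : IsCandidate S O)
    (τ : Fin m → ℝ) (hτ : ∀ i, IsLeast (spectrum ℝ (lagrange S O i)) (τ i))
    (L : Matrix (Idx d) (Idx d) ℝ)
    (hLdiag : ∀ i, blk L i i =
      O i * lagrange S O i * (O i)ᵀ +
        τ i • ((1 : Matrix (Fin (d i)) (Fin (d i)) ℝ) - O i * (O i)ᵀ) - blk S i i)
    (hLoff : ∀ i j, i ≠ j → blk L i j = -blk S i j)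
    (hcond : specNorm ((stack Θ)ᵀ * stack O - (m : ℝ) • (1 : Matrix (Fin r) (Fin r) ℝ)) +
        specNorm (stack Θ - stack O) ^ 2 +
        (⨆ i, specNorm (rblk (W * stack O) i)) +
        m * (⨆ i, specNorm ((O i)ᵀ * Θ i - 1)) +
        specNorm W ≤ (m : ℝ)) :
    L.PosSemidef := by
  classical
  -- Abbreviations
  set G : Matrix (Fin r) (Fin r) ℝ := (stack Θ)ᵀ * stack O with hG
  set a : ℝ := specNorm ((stack Θ)ᵀ * stack O - (m : ℝ) • (1 : Matrix (Fin r) (Fin r) ℝ)) with ha'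
  set b : ℝ := specNorm (stack Θ - stack O) with hb'
  set c : ℝ := ⨆ i, specNorm (rblk (W * stack O) i) with hc'
  set f : ℝ := ⨆ i, specNorm ((O i)ᵀ * Θ i - 1) with hf'
  set w : ℝ := specNorm W with hw'
  obtain ⟨⟨hOsemi, hcrit2⟩, hΛpsd⟩ := hcand
  have hΛsymm : ∀ i, (lagrange S O i).IsSymm := fun i => (hcrit2 i).1
  have hcrit : ∀ i, O i * lagrange S O i = ∑ j, blk S i j * O j := fun i => (hcrit2 i).2
  obtain ⟨hWsymm, hblkS⟩ := hmodel
  have hm0 : (0:ℝ) < (m:ℝ) := by exact_mod_cast hm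
  -- nonnegativity of the norm quantities
  have ha0 : 0 ≤ a := norm_nonneg _
  have hb0 : 0 ≤ b := norm_nonneg _
  have hw0 : 0 ≤ w := norm_nonneg _
  have hbdd1 : BddAbove (Set.range fun i => specNorm (rblk (W * stack O) i)) :=
    Set.Finite.bddAbove (Set.finite_range _)
  have hbdd2 : BddAbove (Set.range fun i => specNorm ((O i)ᵀ * Θ i - 1)) :=
    Set.Finite.bddAbove (Set.finite_range _)
  have hcle : ∀ i, specNorm (rblk (W * stack O) i) ≤ c := fun i => le_ciSup hbdd1 i
  have hfle : ∀ i, specNorm ((O i)ᵀ * Θ i - 1) ≤ f := fun i => le_ciSup hbdd2 i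
  have i0 : Fin m := ⟨0, hm⟩
  have hc0 : 0 ≤ c := le_trans (norm_nonneg _) (hcle i0)
  have hf0 : 0 ≤ f := le_trans (norm_nonneg _) (hfle i0)
  -- basic semi-orthogonality of the stacked matrices
  have hOO : (stack O)ᵀ * stack O = (m : ℝ) • 1 := by
    rw [stackT_mul_stack]
    have : ∀ i : Fin m, (O i)ᵀ * O i = (1 : Matrix (Fin r) (Fin r) ℝ) := hOsemi
    calc (∑ i, (O i)ᵀ * O i) = ∑ _i : Fin m, (1 : Matrix (Fin r) (Fin r) ℝ) := by
          exact Finset.sum_congr rfl fun i _ => this i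
    _ = (m : ℝ) • 1 := by
          rw [Finset.sum_const, Finset.card_univ, Fintype.card_fin, Nat.cast_smul_eq_nsmul]
  have hΘΘ : (stack Θ)ᵀ * stack Θ = (m : ℝ) • 1 := by
    rw [stackT_mul_stack]
    calc (∑ i, (Θ i)ᵀ * Θ i) = ∑ _i : Fin m, (1 : Matrix (Fin r) (Fin r) ℝ) :=
          Finset.sum_congr rfl fun i _ => hΘ i
    _ = (m : ℝ) • 1 := by
          rw [Finset.sum_const, Finset.card_univ, Fintype.card_fin, Nat.cast_smul_eq_nsmul]
  -- symmetry of S (entrywise)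
  have hblkWsymm : ∀ i j, (blk W i j)ᵀ = blk W j i := by
    intro i j
    ext p q
    show W ⟨i, q⟩ ⟨j, p⟩ = W ⟨j, p⟩ ⟨i, q⟩
    exact (congrFun (congrFun hWsymm ⟨j, p⟩) ⟨i, q⟩).symm ▸ rfl
  have hblkSsymm : ∀ i j, (blk S i j)ᵀ = blk S j i := by
    intro i j
    rw [hblkS i j, hblkS j i, transpose_add, transpose_mul, transpose_transpose, hblkWsymm]
  have hSsym : ∀ p q : Idx d, S q p = S p q := by
    rintro ⟨i, aa⟩ ⟨j, bb⟩
    have := congrFun (congrFun (hblkSsymm j i) aa) bb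
    exact this
  -- the Lagrange multiplier identity  Λ_i = G + F_i G + O_iᵀ R_i
  have hlag : ∀ i, lagrange S O i
      = G + ((O i)ᵀ * Θ i - 1) * G + (O i)ᵀ * rblk (W * stack O) i := by
    intro i
    have hsum : (∑ j, blk S i j * O j) = Θ i * G + rblk (W * stack O) i := by
      rw [rblk_mul_stack, hG, stackT_mul_stack, Matrix.mul_sum, ← Finset.sum_add_distrib]
      refine Finset.sum_congr rfl fun j _ => ?_
      rw [hblkS i j, Matrix.add_mul, Matrix.mul_assoc]
    rw [lagrange, hsum, Matrix.mul_add, ← Matrix.mul_assoc, Matrix.sub_mul, Matrix.one_mul]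
    abel
  -- lower bound for the τ i
  have htau : ∀ i, (m : ℝ) - (a + (m : ℝ) * f + c) ≤ τ i := by
    intro i
    obtain ⟨v, hv0, hv⟩ := exists_eigvec (lagrange S O i) (τ i) (hτ i).1
    have hvpos : 0 < OTSMCertAux.enorm v := OTSMCertAux.enorm_pos hv0
    -- (m - τ i) • v = -( (G - m•1) *ᵥ v + F_i *ᵥ (G *ᵥ v) + O_iᵀ *ᵥ (R_i *ᵥ v) )
    have hkey : ((m : ℝ) - τ i) • v
        = -(((stack Θ)ᵀ * stack O - (m : ℝ) • 1) *ᵥ v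
            + ((O i)ᵀ * Θ i - 1) *ᵥ (G *ᵥ v)
            + (O i)ᵀ *ᵥ (rblk (W * stack O) i *ᵥ v)) := by
      have h1 : lagrange S O i *ᵥ v = τ i • v := hv
      rw [hlag i] at h1
      rw [add_mulVec, add_mulVec] at h1
      have h2 : (((O i)ᵀ * Θ i - 1) * G) *ᵥ v = ((O i)ᵀ * Θ i - 1) *ᵥ (G *ᵥ v) :=
        (mulVec_mulVec _ _ _).symm
      have h3 : ((O i)ᵀ * rblk (W * stack O) i) *ᵥ v
          = (O i)ᵀ *ᵥ (rblk (W * stack O) i *ᵥ v) := (mulVec_mulVec _ _ _).symm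
      rw [h2, h3] at h1
      have h4 : G *ᵥ v = ((stack Θ)ᵀ * stack O - (m : ℝ) • 1) *ᵥ v + (m : ℝ) • v := by
        rw [sub_mulVec, smul_mulVec, one_mulVec, hG]
        abel
      funext q
      have := congrFun h1 q
      have h4q := congrFun h4 q
      simp only [Pi.add_apply, Pi.smul_apply, smul_eq_mul, Pi.neg_apply, Pi.sub_apply] at *
      linarith
    have hGv : OTSMCertAux.enorm (G *ᵥ v) ≤ (m : ℝ) * OTSMCertAux.enorm v := by
      have h5 : G *ᵥ v = (stack Θ)ᵀ *ᵥ (stack O *ᵥ v) := by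
        rw [mulVec_mulVec, hG]
      rw [h5]
      calc OTSMCertAux.enorm ((stack Θ)ᵀ *ᵥ (stack O *ᵥ v))
          ≤ Real.sqrt (m : ℝ) * OTSMCertAux.enorm (stack O *ᵥ v) :=
            OTSMCertAux.enorm_semi_transpose_mulVec_le _ _ (le_of_lt hm0) hΘΘ _
      _ = Real.sqrt (m : ℝ) * (Real.sqrt (m : ℝ) * OTSMCertAux.enorm v) := by
            rw [OTSMCertAux.enorm_semi_mulVec _ _ (le_of_lt hm0) hOO]
      _ = (m : ℝ) * OTSMCertAux.enorm v := by
            rw [← mul_assoc, Real.mul_self_sqrt (le_of_lt hm0)]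
    have hb1 : OTSMCertAux.enorm (((stack Θ)ᵀ * stack O - (m : ℝ) • 1) *ᵥ v) ≤ a * OTSMCertAux.enorm v :=
      OTSMCertAux.enorm_mulVec_le _ _
    have hb2 : OTSMCertAux.enorm (((O i)ᵀ * Θ i - 1) *ᵥ (G *ᵥ v)) ≤ f * ((m : ℝ) * OTSMCertAux.enorm v) := by
      calc OTSMCertAux.enorm (((O i)ᵀ * Θ i - 1) *ᵥ (G *ᵥ v))
          ≤ specNorm ((O i)ᵀ * Θ i - 1) * OTSMCertAux.enorm (G *ᵥ v) := OTSMCertAux.enorm_mulVec_le _ _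
      _ ≤ f * ((m : ℝ) * OTSMCertAux.enorm v) := by
          have := hfle i
          have h6 := OTSMCertAux.enorm_nonneg (G *ᵥ v)
          nlinarith [norm_nonneg (LinearMap.toContinuousLinearMap
            (Matrix.toEuclideanLin ((O i)ᵀ * Θ i - 1)))]
    have hb3 : OTSMCertAux.enorm ((O i)ᵀ *ᵥ (rblk (W * stack O) i *ᵥ v)) ≤ c * OTSMCertAux.enorm v := by
      have hsemi : (O i)ᵀ * O i = (1:ℝ) • 1 := by rw [hOsemi i, one_smul]
      calc OTSMCertAux.enorm ((O i)ᵀ *ᵥ (rblk (W * stack O) i *ᵥ v))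
          ≤ Real.sqrt 1 * OTSMCertAux.enorm (rblk (W * stack O) i *ᵥ v) :=
            OTSMCertAux.enorm_semi_transpose_mulVec_le _ _ zero_le_one hsemi _
      _ = OTSMCertAux.enorm (rblk (W * stack O) i *ᵥ v) := by rw [Real.sqrt_one, one_mul]
      _ ≤ specNorm (rblk (W * stack O) i) * OTSMCertAux.enorm v := OTSMCertAux.enorm_mulVec_le _ _
      _ ≤ c * OTSMCertAux.enorm v := by
          have := hcle i
          have := OTSMCertAux.enorm_nonneg v
          nlinarith
    have hfinal : ((m : ℝ) - τ i) * OTSMCertAux.enorm v ≤ (a + (m : ℝ) * f + c) * OTSMCertAux.enorm v := by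
      have e1 : OTSMCertAux.enorm (((m : ℝ) - τ i) • v) = |(m : ℝ) - τ i| * OTSMCertAux.enorm v := OTSMCertAux.enorm_smul _ _
      have e2 : ((m : ℝ) - τ i) * OTSMCertAux.enorm v ≤ |(m : ℝ) - τ i| * OTSMCertAux.enorm v := by
        have := le_abs_self ((m : ℝ) - τ i)
        nlinarith
      have e3 : OTSMCertAux.enorm (((m : ℝ) - τ i) • v)
          ≤ a * OTSMCertAux.enorm v + f * ((m : ℝ) * OTSMCertAux.enorm v) + c * OTSMCertAux.enorm v := by
        rw [hkey, OTSMCertAux.enorm_neg]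
        calc OTSMCertAux.enorm (((stack Θ)ᵀ * stack O - (m : ℝ) • 1) *ᵥ v
            + ((O i)ᵀ * Θ i - 1) *ᵥ (G *ᵥ v)
            + (O i)ᵀ *ᵥ (rblk (W * stack O) i *ᵥ v))
            ≤ OTSMCertAux.enorm (((stack Θ)ᵀ * stack O - (m : ℝ) • 1) *ᵥ v
              + ((O i)ᵀ * Θ i - 1) *ᵥ (G *ᵥ v))
              + OTSMCertAux.enorm ((O i)ᵀ *ᵥ (rblk (W * stack O) i *ᵥ v)) := OTSMCertAux.enorm_add_le _ _
        _ ≤ (OTSMCertAux.enorm (((stack Θ)ᵀ * stack O - (m : ℝ) • 1) *ᵥ v)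
              + OTSMCertAux.enorm (((O i)ᵀ * Θ i - 1) *ᵥ (G *ᵥ v)))
              + OTSMCertAux.enorm ((O i)ᵀ *ᵥ (rblk (W * stack O) i *ᵥ v)) := by
            have := OTSMCertAux.enorm_add_le (((stack Θ)ᵀ * stack O - (m : ℝ) • 1) *ᵥ v)
              (((O i)ᵀ * Θ i - 1) *ᵥ (G *ᵥ v))
            linarith
        _ ≤ a * OTSMCertAux.enorm v + f * ((m : ℝ) * OTSMCertAux.enorm v) + c * OTSMCertAux.enorm v := by linarith
      calc ((m : ℝ) - τ i) * OTSMCertAux.enorm v ≤ |(m : ℝ) - τ i| * OTSMCertAux.enorm v := e2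
      _ = OTSMCertAux.enorm (((m : ℝ) - τ i) • v) := e1.symm
      _ ≤ a * OTSMCertAux.enorm v + f * ((m : ℝ) * OTSMCertAux.enorm v) + c * OTSMCertAux.enorm v := e3
      _ = (a + (m : ℝ) * f + c) * OTSMCertAux.enorm v := by ring
    nlinarith
  -- symmetry of L
  have hLsymmE : ∀ p q : Idx d, L q p = L p q := by
    rintro ⟨i, aa⟩ ⟨j, bb⟩
    by_cases hij : i = j
    · subst hij
      have hsym : (blk L i i)ᵀ = blk L i i := by
        rw [hLdiag i]
        rw [transpose_sub, transpose_add, transpose_smul, transpose_sub, transpose_one]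
        rw [transpose_mul, transpose_mul, transpose_transpose, transpose_mul, transpose_transpose]
        rw [(hΛsymm i)]
        rw [hblkSsymm i i, ← Matrix.mul_assoc]
      have := congrFun (congrFun hsym aa) bb
      exact this
    · have hji : j ≠ i := fun h => hij h.symm
      have e1 : L ⟨j, bb⟩ ⟨i, aa⟩ = -(S ⟨j, bb⟩ ⟨i, aa⟩) := by
        have := congrFun (congrFun (hLoff j i hji) bb) aa
        exact this
      have e2 : L ⟨i, aa⟩ ⟨j, bb⟩ = -(S ⟨i, aa⟩ ⟨j, bb⟩) := by
        have := congrFun (congrFun (hLoff i j hij) aa) bb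
        exact this
      rw [e1, e2, hSsym]
  have hLsymm : Lᵀ = L := by
    ext p q
    rw [transpose_apply]
    exact hLsymmE p q
  -- L * stack O = 0
  have hblkLO : ∀ i, (∑ j, blk L i j * O j) = 0 := by
    intro i
    have hsplit : ∀ j, blk L i j * O j
        = (if j = i then (O i * lagrange S O i * (O i)ᵀ
            + τ i • ((1 : Matrix (Fin (d i)) (Fin (d i)) ℝ) - O i * (O i)ᵀ)) * O i else 0)
          - blk S i j * O j := by
      intro j
      by_cases h : j = i
      · subst h
        rw [if_pos rfl, hLdiag j, Matrix.sub_mul]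
      · rw [if_neg h, hLoff i j (fun hh => h hh.symm), Matrix.neg_mul, zero_sub]
    calc (∑ j, blk L i j * O j)
        = ∑ j, ((if j = i then (O i * lagrange S O i * (O i)ᵀ
            + τ i • ((1 : Matrix (Fin (d i)) (Fin (d i)) ℝ) - O i * (O i)ᵀ)) * O i else 0)
          - blk S i j * O j) := Finset.sum_congr rfl fun j _ => hsplit j
    _ = (O i * lagrange S O i * (O i)ᵀ
            + τ i • ((1 : Matrix (Fin (d i)) (Fin (d i)) ℝ) - O i * (O i)ᵀ)) * O i
          - ∑ j, blk S i j * O j := by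
        rw [Finset.sum_sub_distrib, Finset.sum_ite_eq' Finset.univ i]
        simp
    _ = 0 := by
        rw [Matrix.add_mul, Matrix.mul_assoc (O i * lagrange S O i), hOsemi i, Matrix.mul_one,
          Matrix.smul_mul, Matrix.sub_mul, Matrix.one_mul, Matrix.mul_assoc (O i), hOsemi i,
          Matrix.mul_one, sub_self, smul_zero, add_zero, hcrit i, sub_self]
  have hLO : L * stack O = 0 := by
    ext p k
    rcases p with ⟨i, aa⟩
    have h1 : (L * stack O) ⟨i, aa⟩ k = rblk (L * stack O) i aa k := rfl
    rw [h1, rblk_mul_stack, hblkLO i]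
    rfl
  -- positive semidefiniteness on the orthogonal complement of the columns of stack O
  have hker : ∀ x : Idx d → ℝ, (stack O)ᵀ *ᵥ x = 0 → 0 ≤ x ⬝ᵥ (L *ᵥ x) := by
    intro x hx
    set z : Fin r → ℝ := (stack Θ)ᵀ *ᵥ x with hz
    -- quadratic form decomposition
    have hquad : x ⬝ᵥ (L *ᵥ x)
        = (∑ i, vblk x i ⬝ᵥ ((O i * lagrange S O i * (O i)ᵀ
            + τ i • ((1 : Matrix (Fin (d i)) (Fin (d i)) ℝ) - O i * (O i)ᵀ)) *ᵥ vblk x i))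
          - (z ⬝ᵥ z + x ⬝ᵥ (W *ᵥ x)) := by
      have hdec : x ⬝ᵥ (L *ᵥ x) = ∑ i, ∑ j, vblk x i ⬝ᵥ (blk L i j *ᵥ vblk x j) := by
        rw [dot_idx]
        refine Finset.sum_congr rfl fun i _ => ?_
        rw [vblk_mulVec, dot_sum]
      have hsplit : ∀ i j, vblk x i ⬝ᵥ (blk L i j *ᵥ vblk x j)
          = (if j = i then vblk x i ⬝ᵥ ((O i * lagrange S O i * (O i)ᵀ
              + τ i • ((1 : Matrix (Fin (d i)) (Fin (d i)) ℝ) - O i * (O i)ᵀ)) *ᵥ vblk x i)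
            else 0)
            - vblk x i ⬝ᵥ (blk S i j *ᵥ vblk x j) := by
        intro i j
        by_cases h : j = i
        · subst h
          rw [if_pos rfl, hLdiag j, sub_mulVec, dotProduct_sub]
        · rw [if_neg h, hLoff i j (fun hh => h hh.symm), neg_mulVec, dotProduct_neg, zero_sub]
      have hS : ∑ i, ∑ j, vblk x i ⬝ᵥ (blk S i j *ᵥ vblk x j) = z ⬝ᵥ z + x ⬝ᵥ (W *ᵥ x) := by
        have hterm : ∀ i j, vblk x i ⬝ᵥ (blk S i j *ᵥ vblk x j)
            = ((Θ i)ᵀ *ᵥ vblk x i) ⬝ᵥ ((Θ j)ᵀ *ᵥ vblk x j)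
              + vblk x i ⬝ᵥ (blk W i j *ᵥ vblk x j) := by
          intro i j
          rw [hblkS i j, add_mulVec, dotProduct_add]
          congr 1
          rw [← mulVec_mulVec, dotProduct_comm, dot_mulVec_left, dotProduct_comm]
        calc (∑ i, ∑ j, vblk x i ⬝ᵥ (blk S i j *ᵥ vblk x j))
            = ∑ i, ∑ j, (((Θ i)ᵀ *ᵥ vblk x i) ⬝ᵥ ((Θ j)ᵀ *ᵥ vblk x j)
                + vblk x i ⬝ᵥ (blk W i j *ᵥ vblk x j)) :=
              Finset.sum_congr rfl fun i _ => Finset.sum_congr rfl fun j _ => hterm i j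
        _ = (∑ i, ∑ j, ((Θ i)ᵀ *ᵥ vblk x i) ⬝ᵥ ((Θ j)ᵀ *ᵥ vblk x j))
              + ∑ i, ∑ j, vblk x i ⬝ᵥ (blk W i j *ᵥ vblk x j) := by
            rw [← Finset.sum_add_distrib]
            exact Finset.sum_congr rfl fun i _ => by rw [← Finset.sum_add_distrib]
        _ = z ⬝ᵥ z + x ⬝ᵥ (W *ᵥ x) := by
            congr 1
            · rw [hz, stackT_mulVec, sum_dot]
              exact Finset.sum_congr rfl fun i _ => (dot_sum _ _ _).symm
            · rw [dot_idx]
              refine (Finset.sum_congr rfl fun i _ => ?_).symm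
              rw [vblk_mulVec, dot_sum]
      rw [hdec]
      calc (∑ i, ∑ j, vblk x i ⬝ᵥ (blk L i j *ᵥ vblk x j))
          = ∑ i, ((∑ j, (if j = i then vblk x i ⬝ᵥ ((O i * lagrange S O i * (O i)ᵀ
              + τ i • ((1 : Matrix (Fin (d i)) (Fin (d i)) ℝ) - O i * (O i)ᵀ)) *ᵥ vblk x i)
            else 0)) - ∑ j, vblk x i ⬝ᵥ (blk S i j *ᵥ vblk x j)) := by
            refine Finset.sum_congr rfl fun i _ => ?_
            rw [← Finset.sum_sub_distrib]
            exact Finset.sum_congr rfl fun j _ => hsplit i j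
      _ = (∑ i, vblk x i ⬝ᵥ ((O i * lagrange S O i * (O i)ᵀ
              + τ i • ((1 : Matrix (Fin (d i)) (Fin (d i)) ℝ) - O i * (O i)ᵀ)) *ᵥ vblk x i))
            - ∑ i, ∑ j, vblk x i ⬝ᵥ (blk S i j *ᵥ vblk x j) := by
            rw [Finset.sum_sub_distrib]
            congr 1
            refine Finset.sum_congr rfl fun i _ => ?_
            rw [Finset.sum_ite_eq' Finset.univ i]
            simp
      _ = _ := by rw [hS]
    -- diagonal lower bound
    have hdiag : ∀ i, τ i * (vblk x i ⬝ᵥ vblk x i)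
        ≤ vblk x i ⬝ᵥ ((O i * lagrange S O i * (O i)ᵀ
            + τ i • ((1 : Matrix (Fin (d i)) (Fin (d i)) ℝ) - O i * (O i)ᵀ)) *ᵥ vblk x i) := by
      intro i
      set y : Fin r → ℝ := (O i)ᵀ *ᵥ vblk x i with hy
      have e1 : vblk x i ⬝ᵥ ((O i * lagrange S O i * (O i)ᵀ) *ᵥ vblk x i)
          = y ⬝ᵥ (lagrange S O i *ᵥ y) := by
        rw [← mulVec_mulVec, ← mulVec_mulVec, dotProduct_comm, dot_mulVec_left, dotProduct_comm,
          ← hy]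
      have e2 : vblk x i ⬝ᵥ ((τ i • ((1 : Matrix (Fin (d i)) (Fin (d i)) ℝ) - O i * (O i)ᵀ))
            *ᵥ vblk x i) = τ i * (vblk x i ⬝ᵥ vblk x i - y ⬝ᵥ y) := by
        rw [smul_mulVec, sub_mulVec, one_mulVec, dotProduct_smul, smul_eq_mul]
        congr 1
        rw [dotProduct_sub]
        congr 1
        rw [← mulVec_mulVec, dotProduct_comm, dot_mulVec_left, dotProduct_comm, ← hy, hy,
          dotProduct_comm]
      have e3 : τ i * (y ⬝ᵥ y) ≤ y ⬝ᵥ (lagrange S O i *ᵥ y) :=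
        rayleigh_lower _ (hΛsymm i) _ (hτ i) y
      rw [add_mulVec, dotProduct_add, e1, e2]
      linarith
    -- bound on z
    have hzb : z ⬝ᵥ z ≤ (b * b) * (x ⬝ᵥ x) := by
      have hz2 : z = (stack Θ - stack O)ᵀ *ᵥ x := by
        rw [transpose_sub, sub_mulVec, hx, sub_zero, hz]
      have h1 : OTSMCertAux.enorm z ≤ b * OTSMCertAux.enorm x := by
        rw [hz2, hb']
        exact OTSMCertAux.enorm_transpose_mulVec_le _ _
      have h2 := OTSMCertAux.enorm_nonneg z
      have h3 := OTSMCertAux.enorm_nonneg x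
      calc z ⬝ᵥ z = OTSMCertAux.enorm z * OTSMCertAux.enorm z := (OTSMCertAux.enorm_sq z).symm
      _ ≤ (b * OTSMCertAux.enorm x) * (b * OTSMCertAux.enorm x) := by nlinarith
      _ = (b * b) * (OTSMCertAux.enorm x * OTSMCertAux.enorm x) := by ring
      _ = (b * b) * (x ⬝ᵥ x) := by rw [OTSMCertAux.enorm_sq]
    -- bound on the W term
    have hWb : x ⬝ᵥ (W *ᵥ x) ≤ w * (x ⬝ᵥ x) := by
      have h1 : x ⬝ᵥ (W *ᵥ x) ≤ OTSMCertAux.enorm x * OTSMCertAux.enorm (W *ᵥ x) := dot_le_enorm _ _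
      have h2 : OTSMCertAux.enorm (W *ᵥ x) ≤ w * OTSMCertAux.enorm x := OTSMCertAux.enorm_mulVec_le _ _
      have h3 := OTSMCertAux.enorm_nonneg x
      have h4 := OTSMCertAux.enorm_sq x
      nlinarith
    -- conclude
    have hsum1 : ∑ i, (vblk x i ⬝ᵥ vblk x i) = x ⬝ᵥ x := (dot_idx x x).symm
    have hsum2 : ((m : ℝ) - (a + (m : ℝ) * f + c)) * (x ⬝ᵥ x)
        ≤ ∑ i, vblk x i ⬝ᵥ ((O i * lagrange S O i * (O i)ᵀ
            + τ i • ((1 : Matrix (Fin (d i)) (Fin (d i)) ℝ) - O i * (O i)ᵀ)) *ᵥ vblk x i) := by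
      calc ((m : ℝ) - (a + (m : ℝ) * f + c)) * (x ⬝ᵥ x)
          = ∑ i, ((m : ℝ) - (a + (m : ℝ) * f + c)) * (vblk x i ⬝ᵥ vblk x i) := by
            rw [← Finset.mul_sum, hsum1]
      _ ≤ ∑ i, τ i * (vblk x i ⬝ᵥ vblk x i) := by
            refine Finset.sum_le_sum fun i _ => ?_
            have := htau i
            have := dot_self_nonneg' (vblk x i)
            nlinarith
      _ ≤ _ := Finset.sum_le_sum fun i _ => hdiag i
    have hcond2 : a + b * b + c + (m : ℝ) * f + w ≤ (m : ℝ) := by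
      rw [ha', hb', hc', hf', hw']
      calc specNorm ((stack Θ)ᵀ * stack O - (m : ℝ) • (1 : Matrix (Fin r) (Fin r) ℝ))
            + specNorm (stack Θ - stack O) * specNorm (stack Θ - stack O)
            + (⨆ i, specNorm (rblk (W * stack O) i))
            + (m : ℝ) * (⨆ i, specNorm ((O i)ᵀ * Θ i - 1)) + specNorm W
          = specNorm ((stack Θ)ᵀ * stack O - (m : ℝ) • (1 : Matrix (Fin r) (Fin r) ℝ))
            + specNorm (stack Θ - stack O) ^ 2
            + (⨆ i, specNorm (rblk (W * stack O) i))
            + (m : ℝ) * (⨆ i, specNorm ((O i)ᵀ * Θ i - 1)) + specNorm W := by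
            rw [sq]
      _ ≤ (m : ℝ) := hcond
    have hxx := dot_self_nonneg' x
    rw [hquad]
    nlinarith
  -- assemble: split x into its component along stack O and the orthogonal part
  refine Matrix.PosSemidef.of_dotProduct_mulVec_nonneg ?_ ?_
  · rw [Matrix.IsHermitian, conjTranspose]
    ext p q
    simp only [Matrix.map_apply, transpose_apply, star_trivial]
    exact hLsymmE p q
  · intro x
    rw [star_trivial]
    set cvec : Fin r → ℝ := (m : ℝ)⁻¹ • ((stack O)ᵀ *ᵥ x) with hcv
    set xt : Idx d → ℝ := x - stack O *ᵥ cvec with hxt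
    have hOxt : (stack O)ᵀ *ᵥ xt = 0 := by
      rw [hxt, mulVec_sub, mulVec_mulVec, hOO, hcv, smul_mulVec, one_mulVec,
        smul_smul, mul_inv_cancel₀ (ne_of_gt hm0), one_smul, sub_self]
    have hLxt : L *ᵥ x = L *ᵥ xt := by
      rw [hxt, mulVec_sub, mulVec_mulVec, hLO, zero_mulVec, sub_zero]
    have hsplit : x ⬝ᵥ (L *ᵥ x) = xt ⬝ᵥ (L *ᵥ xt) := by
      rw [hLxt]
      have hx' : x = xt + stack O *ᵥ cvec := by rw [hxt]; abel
      rw [hx', add_dotProduct]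
      have hzero : (stack O *ᵥ cvec) ⬝ᵥ (L *ᵥ xt) = 0 := by
        rw [dot_mulVec_left, mulVec_mulVec]
        have hOL : (stack O)ᵀ * L = 0 := by
          have h1 : ((L * stack O)ᵀ : Matrix (Fin r) (Idx d) ℝ) = (stack O)ᵀ * L := by
            rw [transpose_mul, hLsymm]
          rw [← h1, hLO, transpose_zero]
        rw [hOL, zero_mulVec, dotProduct_zero]
      rw [hzero, add_zero]
    rw [hsplit]
    exact hker xt hOxt

end
end

section
/- Let X, Y ∈ ℝ^{d×r} satisfy XᵀX = YᵀY = I_r, and let A ∈ ℝ^{r×r} be symmetric positive semidefinite with smallest eigenvalue λ_min(A). Then tr((I_r − YᵀX)A) ≥ (1/2)·λ_min(A)·‖X − Y‖_F². -/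
open Matrix BigOperators MeasureTheory ProbabilityTheory

noncomputable section

lemma psd_trace_nonneg' {n : ℕ} {M : Matrix (Fin n) (Fin n) ℝ} (hM : M.PosSemidef) :
    0 ≤ Matrix.trace M := by
  rw [Matrix.trace]
  apply Finset.sum_nonneg
  intro i _
  exact hM.diag_nonneg

lemma sub_smul_one_psd' {r : ℕ} {A : Matrix (Fin r) (Fin r) ℝ} (hA : A.PosSemidef)
    {lam : ℝ} (hlam : ∀ x ∈ spectrum ℝ A, lam ≤ x) :
    (A - lam • (1 : Matrix (Fin r) (Fin r) ℝ)).PosSemidef := by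
  have hH := hA.1
  have hspec := hH.spectral_theorem
  set U : Matrix (Fin r) (Fin r) ℝ := (hH.eigenvectorUnitary : Matrix (Fin r) (Fin r) ℝ)
  have hU : U * star U = 1 := (Matrix.mem_unitaryGroup_iff).mp hH.eigenvectorUnitary.2
  have key : A - lam • 1 = U * (Matrix.diagonal (fun i => hH.eigenvalues i - lam)) * star U := by
    have : (Matrix.diagonal (fun i => hH.eigenvalues i - lam) : Matrix (Fin r) (Fin r) ℝ)
        = Matrix.diagonal (RCLike.ofReal ∘ hH.eigenvalues) - lam • 1 := by
      ext i j
      by_cases h : i = j <;> simp [Matrix.diagonal, h, Matrix.one_apply, Matrix.smul_apply]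
    rw [Unitary.conjStarAlgAut_apply] at hspec
    rw [this, Matrix.mul_sub, Matrix.sub_mul, ← hspec]
    congr 1
    rw [Matrix.mul_smul, Matrix.mul_one, Matrix.smul_mul, hU]
  rw [key]
  exact (Matrix.posSemidef_diagonal_iff.mpr fun i => sub_nonneg.mpr
    (hlam _ (hH.eigenvalues_mem_spectrum_real i))).mul_mul_conjTranspose_same U

/-- for semi-orthogonal `X, Y` and symmetric positive semidefinite `A` with
smallest eigenvalue `λ_min(A)`, one has `tr((I - YᵀX)A) ≥ (1/2) λ_min(A) ‖X - Y‖_F²`. -/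
theorem semiorth_psd_trace_lower_bound {dd r : ℕ} (hdr : r ≤ dd)
    (X Y : Matrix (Fin dd) (Fin r) ℝ)
    (hX : Xᵀ * X = 1) (hY : Yᵀ * Y = 1)
    (A : Matrix (Fin r) (Fin r) ℝ) (hA : A.PosSemidef)
    (lam : ℝ) (hlam : IsLeast (spectrum ℝ A) lam) :
    (1 / 2) * lam * frobNorm (X - Y) ^ 2 ≤
      Matrix.trace (((1 : Matrix (Fin r) (Fin r) ℝ) - Yᵀ * X) * A) := by
  set C : Matrix (Fin r) (Fin r) ℝ := (X - Y)ᵀ * (X - Y) with hC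
  have hfrob : frobNorm (X - Y) ^ 2 = Matrix.trace C := by
    rw [frobNorm, Real.sq_sqrt (by positivity)]
    rw [hC, Matrix.trace, Finset.sum_comm]
    simp [Matrix.diag, Matrix.mul_apply, sq]
  have hAsymm : Aᵀ = A := hA.1
  have htr1 : Matrix.trace ((Xᵀ * Y) * A) = Matrix.trace ((Yᵀ * X) * A) := by
    rw [← Matrix.trace_transpose ((Xᵀ * Y) * A)]
    rw [Matrix.transpose_mul, Matrix.transpose_mul, Matrix.transpose_transpose, hAsymm]
    rw [Matrix.trace_mul_comm, Matrix.mul_assoc]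
  have hCA : Matrix.trace (C * A) =
      2 * Matrix.trace (((1 : Matrix (Fin r) (Fin r) ℝ) - Yᵀ * X) * A) := by
    have hexp : C = (1 : Matrix (Fin r) (Fin r) ℝ) + 1 - Xᵀ * Y - Yᵀ * X := by
      rw [hC, Matrix.transpose_sub, Matrix.sub_mul, Matrix.mul_sub, Matrix.mul_sub, hX, hY]
      abel
    rw [hexp]
    simp only [Matrix.sub_mul, Matrix.add_mul, Matrix.one_mul, Matrix.trace_sub,
      Matrix.trace_add, htr1]
    ring
  have hpsd : ((X - Y) * (A - lam • 1) * (X - Y)ᴴ).PosSemidef :=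
    (sub_smul_one_psd' hA (fun x hx => hlam.2 hx)).mul_mul_conjTranspose_same (X - Y)
  have hineq : 0 ≤ Matrix.trace (C * A) - lam * Matrix.trace C := by
    have h0 := psd_trace_nonneg' hpsd
    rw [Matrix.conjTranspose_eq_transpose_of_trivial] at h0
    rw [Matrix.trace_mul_cycle] at h0
    rw [← hC, Matrix.mul_sub, Matrix.trace_sub, Matrix.mul_smul,
      Matrix.mul_one, Matrix.trace_smul, smul_eq_mul] at h0
    linarith
  have hlam_le : lam * Matrix.trace C ≤ Matrix.trace (C * A) := by linarith
  rw [hfrob]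
  linarith [hCA ▸ hlam_le]
end
end
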